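/- Let p be an odd prime, k a natural number, and x a natural number with 0 < x < 2^k and 2x < p. Then for every mask t < p: ⌊((x + t) mod p)/2^k⌋ ≤ ⌊t/2^k⌋ if and only if (p − x ≤ t) or (t mod 2^k < 2^k − x). In other words, the k-bit truncated stochastic sign test (PosZero mode) incorrectly declares the small positive value x 'negative' exactly for those masks that either cause modular overflow (the Theorem 1 fault) or whose low k bits satisfy t mod 2^k < 2^k − x (the Theorem 2 truncation fault). -/

import Mathlib

/-- For an odd prime `p` and a small positive field value `x` (`0 < x < 2^k`,
`2x < p`), the `k`-bit truncated stochastic sign test (PosZero mode) declares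
`x` negative, i.e. `⌊((x + t) % p)/2^k⌋ ≤ ⌊t/2^k⌋`, exactly for those masks
`t < p` that either cause modular overflow (`p - x ≤ t`) or whose low `k` bits
satisfy `t % 2^k < 2^k - x`. -/
theorem truncated_sign_full_fault_set (p k x : ℕ) (hp : Nat.Prime p)
    (hodd : Odd p) (hx : 0 < x) (hxk : x < 2 ^ k) (hxp : 2 * x < p) :
    ∀ t : ℕ, t < p →
      (((x + t) % p) / 2 ^ k ≤ t / 2 ^ k ↔ p - x ≤ t ∨ t % 2 ^ k < 2 ^ k - x) := by
  intro t ht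
  have h2k : 0 < 2 ^ k := Nat.pow_pos (by norm_num)
  by_cases hcase : p - x ≤ t
  · have h1 : p ≤ x + t := by omega
    have hmod : (x + t) % p = x + t - p := by
      rw [Nat.mod_eq_sub_mod h1, Nat.mod_eq_of_lt (by omega)]
    rw [hmod]
    constructor
    · intro _; exact Or.inl hcase
    · intro _; exact Nat.div_le_div_right (by omega)
  · have hmod : (x + t) % p = x + t := Nat.mod_eq_of_lt (by omega)
    rw [hmod]
    have hdm := Nat.div_add_mod t (2 ^ k)
    have hdecomp : x + t = 2 ^ k * (t / 2 ^ k) + (x + t % 2 ^ k) := by omega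
    rw [hdecomp, Nat.mul_add_div h2k]
    have hmlt : t % 2 ^ k < 2 ^ k := Nat.mod_lt _ h2k
    constructor
    · intro h
      right
      have h0 : (x + t % 2 ^ k) / 2 ^ k ≤ 0 :=
        Nat.le_of_add_le_add_left (a := t / 2 ^ k) (by simpa using h)
      have h1 : (x + t % 2 ^ k) / 2 ^ k = 0 := Nat.le_zero.mp h0
      have := Nat.div_eq_zero_iff.mp h1
      omega
    · rintro (h | h)
      · omega
      · have hlt : x + t % 2 ^ k < 2 ^ k := by omega
        rw [Nat.div_eq_of_lt hlt]; omega
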